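/- Let p be a prime and N = pM with p | M. Fix an integer c₀ with gcd(c₀, N) = 1. Suppose that for each j ∈ {0,1,…,p−1} we are given a matrix δ_j = (a_j b_j; j·c_j·M d_j) ∈ Γ₀(M) such that δ_j ≡ I (mod p) entrywise and c_j ≡ c₀ (mod p). Then the coset space Γ∞\Γ₀(M) is the disjoint union over j ∈ {0,1,…,p−1} of the sets of cosets {Γ∞·(γ·δ_j) : γ ∈ Γ₀(N)}. -/

import Mathlib

open Matrix MatrixGroups

local notation "SL2Z" => Matrix.SpecialLinearGroup (Fin 2) ℤ

/-- `Γ₀(K)` as a set of elements of `SL(2,ℤ)`. -/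
def Gamma0' (K : ℤ) : Set SL2Z := { γ | K ∣ γ.1 1 0 }

/-- The translation matrix `T = (1 1; 0 1)`. -/
def Tmat : SL2Z := ⟨!![1, 1; 0, 1], by norm_num [Matrix.det_fin_two_of]⟩

/-- `Γ∞ = {±T^t : t ∈ ℤ}`. -/
def GammaInf : Set SL2Z := { A | ∃ t : ℤ, A = Tmat ^ t ∨ A = -(Tmat ^ t) }

/-- The right coset `Γ∞ · δ`. -/
def cosetOf (δ : SL2Z) : Set SL2Z := { x | ∃ u ∈ GammaInf, x = u * δ }

/-- The coset space `Γ∞ \ Γ₀(K)`, as a set of cosets. -/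
def cosets (K : ℤ) : Set (Set SL2Z) := { C | ∃ δ ∈ Gamma0' K, C = cosetOf δ }

lemma mul_entry (A B : SL2Z) (i j : Fin 2) :
    (A * B).1 i j = A.1 i 0 * B.1 0 j + A.1 i 1 * B.1 1 j := by
  simp [Matrix.SpecialLinearGroup.coe_mul, Matrix.mul_apply, Fin.sum_univ_two]

lemma Tmat_e00 : Tmat.1 0 0 = 1 := rfl
lemma Tmat_e10 : Tmat.1 1 0 = 0 := rfl
lemma Tmat_e11 : Tmat.1 1 1 = 1 := rfl

lemma inv_e00 (A : SL2Z) : (A⁻¹).1 0 0 = A.1 1 1 := by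
  rw [Matrix.SpecialLinearGroup.SL2_inv_expl]; rfl
lemma inv_e10 (A : SL2Z) : (A⁻¹).1 1 0 = -A.1 1 0 := by
  rw [Matrix.SpecialLinearGroup.SL2_inv_expl]; rfl
lemma inv_e11 (A : SL2Z) : (A⁻¹).1 1 1 = A.1 0 0 := by
  rw [Matrix.SpecialLinearGroup.SL2_inv_expl]; rfl

lemma Tpow_bottom (t : ℤ) : (Tmat ^ t).1 1 0 = 0 ∧ (Tmat ^ t).1 1 1 = 1 := by
  induction t using Int.induction_on with
  | zero => simp
  | succ n ih =>
      rw [_root_.zpow_add_one]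
      constructor <;> simp only [mul_entry, ih.1, ih.2, Tmat_e00, Tmat_e10, Tmat_e11] <;> ring
  | pred n ih =>
      rw [_root_.zpow_sub_one]
      constructor <;>
        simp only [mul_entry, ih.1, ih.2, inv_e00, inv_e10, inv_e11, Tmat_e00, Tmat_e10,
          Tmat_e11] <;> ring

lemma gammaInf_bottom {u : SL2Z} (hu : u ∈ GammaInf) : u.1 1 0 = 0 := by
  obtain ⟨t, h | h⟩ := hu
  · rw [h]; exact (Tpow_bottom t).1
  · rw [h]; simp [Matrix.SpecialLinearGroup.coe_neg, (Tpow_bottom t).1]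

lemma one_mem_gammaInf : (1 : SL2Z) ∈ GammaInf := ⟨0, Or.inl (zpow_zero _).symm⟩

lemma self_mem_cosetOf (δ : SL2Z) : δ ∈ cosetOf δ := ⟨1, one_mem_gammaInf, (one_mul δ).symm⟩

lemma det_eq' (A : SL2Z) : A.1 0 0 * A.1 1 1 - A.1 0 1 * A.1 1 0 = 1 := by
  have h := A.2
  rw [Matrix.det_fin_two] at h
  linarith

theorem statement3 (p M : ℕ) (hp : p.Prime) (hM : 0 < M) (hpM : p ∣ M)
    (c₀ : ℤ) (hc₀ : Int.gcd c₀ ((p : ℤ) * M) = 1)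
    (δ : ℕ → SL2Z) (c : ℕ → ℤ)
    (hδmem : ∀ j : ℕ, j < p → δ j ∈ Gamma0' (M : ℤ))
    (hδ21 : ∀ j : ℕ, j < p → (δ j).1 1 0 = (j : ℤ) * c j * M)
    (hδI : ∀ j : ℕ, j < p →
        (δ j).1 0 0 ≡ 1 [ZMOD (p : ℤ)] ∧ (δ j).1 0 1 ≡ 0 [ZMOD (p : ℤ)] ∧
        (δ j).1 1 0 ≡ 0 [ZMOD (p : ℤ)] ∧ (δ j).1 1 1 ≡ 1 [ZMOD (p : ℤ)])
    (hc : ∀ j : ℕ, j < p → c j ≡ c₀ [ZMOD (p : ℤ)]) :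
    (cosets (M : ℤ) =
        ⋃ j ∈ Finset.range p,
          { C | ∃ γ ∈ Gamma0' ((p : ℤ) * M), C = cosetOf (γ * δ j) }) ∧
    (∀ i j : ℕ, i < p → j < p → i ≠ j →
        { C | ∃ γ ∈ Gamma0' ((p : ℤ) * M), C = cosetOf (γ * δ i) } ∩
          { C | ∃ γ ∈ Gamma0' ((p : ℤ) * M), C = cosetOf (γ * δ j) } = ∅) := by
  haveI : Fact p.Prime := ⟨hp⟩
  have hM0 : (M : ℤ) ≠ 0 := Int.natCast_ne_zero.mpr hM.ne'
  -- c₀ is nonzero mod p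
  have hc₀p : ((c₀ : ZMod p)) ≠ 0 := by
    intro h
    have hd : (p : ℤ) ∣ c₀ := (ZMod.intCast_zmod_eq_zero_iff_dvd _ _).mp h
    have h1 : (p : ℤ) ∣ (Int.gcd c₀ ((p : ℤ) * M) : ℤ) := Int.dvd_coe_gcd hd ⟨(M : ℤ), rfl⟩
    rw [hc₀] at h1
    have h2 : p ∣ 1 := by exact_mod_cast h1
    exact hp.ne_one (Nat.dvd_one.mp h2)
  -- entries of δ mod p
  have hδd : ∀ k, k < p → ((δ k).1 1 1 : ZMod p) = 1 := fun k hk => by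
    have h := (ZMod.intCast_eq_intCast_iff _ _ _).mpr (hδI k hk).2.2.2
    rwa [Int.cast_one] at h
  have hcjz : ∀ k, k < p → ((c k : ZMod p)) = (c₀ : ZMod p) := fun k hk =>
    (ZMod.intCast_eq_intCast_iff _ _ _).mpr (hc k hk)
  constructor
  · ext C
    simp only [Set.mem_iUnion, Finset.mem_range, Set.mem_setOf_eq]
    constructor
    · rintro ⟨A, hA, rfl⟩
      obtain ⟨e, he⟩ := hA
      have hA0 : ((A.1 1 0 : ZMod p)) = 0 :=
        (ZMod.intCast_zmod_eq_zero_iff_dvd _ _).mpr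
          (dvd_trans (by exact_mod_cast hpM) ⟨e, he⟩)
      have hdet := det_eq' A
      have hDunit : (A.1 0 0 : ZMod p) * (A.1 1 1 : ZMod p) = 1 := by
        have h := congrArg (fun x : ℤ => (x : ZMod p)) hdet
        push_cast at h
        rw [hA0] at h
        linear_combination h
      have hDne : (A.1 1 1 : ZMod p) ≠ 0 := by
        intro h0
        rw [h0, mul_zero] at hDunit
        exact zero_ne_one hDunit
      set D : ZMod p := (A.1 1 1 : ZMod p) with hD
      set j0 : ZMod p := (e : ZMod p) * (D * (c₀ : ZMod p))⁻¹ with hj0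
      set jv : ℕ := j0.val with hjv
      have hjlt : jv < p := ZMod.val_lt j0
      have hjvcast : ((jv : ℕ) : ZMod p) = j0 := by
        rw [hjv, ZMod.natCast_val, ZMod.cast_id]
      have key : (p : ℤ) ∣ (e * (δ jv).1 1 1 - A.1 1 1 * ((jv : ℤ) * c jv)) := by
        apply (ZMod.intCast_zmod_eq_zero_iff_dvd _ _).mp
        push_cast
        rw [hδd jv hjlt, hcjz jv hjlt, hjvcast, hj0]
        field_simp
        rw [← hD]
        ring
      refine ⟨jv, hjlt, A * (δ jv)⁻¹, ?_, ?_⟩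
      · show ((p : ℤ) * M) ∣ (A * (δ jv)⁻¹).1 1 0
        rw [mul_entry, inv_e00, inv_e10, he, hδ21 jv hjlt]
        obtain ⟨k, hk⟩ := key
        exact ⟨k, by linear_combination (M : ℤ) * hk⟩
      · rw [inv_mul_cancel_right]
    · rintro ⟨j, hj, γ, hγ, rfl⟩
      refine ⟨γ * δ j, ?_, rfl⟩
      show (M : ℤ) ∣ (γ * δ j).1 1 0
      rw [mul_entry]
      exact dvd_add (Dvd.dvd.mul_right (dvd_trans (dvd_mul_left _ _) hγ) _)
        (Dvd.dvd.mul_left (hδmem j hj) _)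
  · intro i j hi hj hij
    rw [Set.eq_empty_iff_forall_notMem]
    rintro C ⟨⟨γ, hγ, rfl⟩, ⟨γ', hγ', hC⟩⟩
    have hmem : γ * δ i ∈ cosetOf (γ' * δ j) := by
      rw [← hC]; exact self_mem_cosetOf _
    obtain ⟨u, hu, heq⟩ := hmem
    have hu0 := gammaInf_bottom hu
    obtain ⟨g, hg⟩ := hγ
    obtain ⟨g', hg'⟩ := hγ'
    -- bottom-left entries
    have h10 : (γ * δ i).1 1 0 =
        u.1 1 0 * (γ' * δ j).1 0 0 + u.1 1 1 * (γ' * δ j).1 1 0 := by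
      rw [heq, mul_entry]
    rw [hu0, zero_mul, zero_add] at h10
    have h11 : (γ * δ i).1 1 1 =
        u.1 1 0 * (γ' * δ j).1 0 1 + u.1 1 1 * (γ' * δ j).1 1 1 := by
      rw [heq, mul_entry]
    rw [hu0, zero_mul, zero_add] at h11
    rw [mul_entry, mul_entry, hδ21 i hi, hδ21 j hj, hg, hg'] at h10
    rw [mul_entry, mul_entry, hg, hg'] at h11
    -- cancel M in h10
    have e1 : (p : ℤ) * g * (δ i).1 0 0 + γ.1 1 1 * ((i : ℤ) * c i) =
        u.1 1 1 * ((p : ℤ) * g' * (δ j).1 0 0 + γ'.1 1 1 * ((j : ℤ) * c j)) := by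
      apply mul_left_cancel₀ hM0
      linear_combination h10
    -- cast to ZMod p
    have E1 : (γ.1 1 1 : ZMod p) * ((i : ZMod p) * (c₀ : ZMod p)) =
        (u.1 1 1 : ZMod p) * ((γ'.1 1 1 : ZMod p) * ((j : ZMod p) * (c₀ : ZMod p))) := by
      have h := congrArg (fun x : ℤ => (x : ZMod p)) e1
      push_cast at h
      rw [ZMod.natCast_self, hcjz i hi, hcjz j hj] at h
      linear_combination h
    have E2 : (γ.1 1 1 : ZMod p) = (u.1 1 1 : ZMod p) * (γ'.1 1 1 : ZMod p) := by
      have h := congrArg (fun x : ℤ => (x : ZMod p)) h11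
      push_cast at h
      rw [ZMod.natCast_self, hδd i hi, hδd j hj] at h
      linear_combination h
    -- γ.1 1 1 is nonzero mod p
    have hG0 : ((γ.1 1 0 : ZMod p)) = 0 :=
      (ZMod.intCast_zmod_eq_zero_iff_dvd _ _).mpr
        (dvd_trans (dvd_mul_right _ _) ⟨g, hg⟩)
    have hdet := det_eq' γ
    have hGunit : (γ.1 0 0 : ZMod p) * (γ.1 1 1 : ZMod p) = 1 := by
      have h := congrArg (fun x : ℤ => (x : ZMod p)) hdet
      push_cast at h
      rw [hG0] at h
      linear_combination h
    have hGne : (γ.1 1 1 : ZMod p) ≠ 0 := by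
      intro h0
      rw [h0, mul_zero] at hGunit
      exact zero_ne_one hGunit
    have hijz : (γ.1 1 1 : ZMod p) * ((i : ZMod p) * (c₀ : ZMod p)) =
        (γ.1 1 1 : ZMod p) * ((j : ZMod p) * (c₀ : ZMod p)) := by
      linear_combination E1 - ((j : ZMod p) * (c₀ : ZMod p)) * E2
    have hIJ : (i : ZMod p) = (j : ZMod p) := by
      have h1 := mul_left_cancel₀ hGne hijz
      exact mul_right_cancel₀ hc₀p h1
    exact hij (by rw [← ZMod.val_cast_of_lt hi, ← ZMod.val_cast_of_lt hj, hIJ])
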